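/- For every natural number m and all reals μ₁, μ₂ > 0, the double integral identity ∫₀^∞ t^m e^{−μ₁ t} (∫₀^t u^m e^{−μ₂ u} du) dt = ((2m+1)! / (2 · 4^m · (μ₁ μ₂)^{m+1})) · ∫_{(μ₁−μ₂)/(μ₁+μ₂)}^{1} (1 − x²)^m dx holds. -/

import Mathlib

open MeasureTheory Real Set

lemma rhsSub (m : ℕ) {μ₁ μ₂ : ℝ} (hμ₁ : 0 < μ₁) (hμ₂ : 0 < μ₂) :
    ∫ x in ((μ₁ - μ₂) / (μ₁ + μ₂))..(1:ℝ), (1 - x ^ 2) ^ m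
      = 2 * 4 ^ m * (μ₁ * μ₂) ^ (m + 1) * ∫ v in (0:ℝ)..1, v ^ m / (μ₁ + μ₂ * v) ^ (2*m+2) := by
  have huIcc : Set.uIcc (0:ℝ) 1 = Set.Icc 0 1 := Set.uIcc_of_le zero_le_one
  have hdpos : ∀ v ∈ Set.Icc (0:ℝ) 1, 0 < μ₁ + μ₂ * v := fun v hv => by nlinarith [hv.1]
  set φ : ℝ → ℝ := fun v => (μ₁ - μ₂ * v) / (μ₁ + μ₂ * v) with hφ
  set φd : ℝ → ℝ := fun v => -(2 * μ₁ * μ₂) / (μ₁ + μ₂ * v) ^ 2 with hφd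
  have hderiv : ∀ v ∈ Set.uIcc (0:ℝ) 1, HasDerivAt φ (φd v) v := by
    intro v hv
    rw [huIcc] at hv
    have hne : μ₁ + μ₂ * v ≠ 0 := (hdpos v hv).ne'
    have h1 : HasDerivAt (fun v : ℝ => μ₁ - μ₂ * v) (-μ₂) v := by
      simpa using ((hasDerivAt_id' v).const_mul μ₂).const_sub μ₁
    have h2 : HasDerivAt (fun v : ℝ => μ₁ + μ₂ * v) μ₂ v := by
      simpa using ((hasDerivAt_id' v).const_mul μ₂).const_add μ₁
    have h3 := h1.div h2 hne
    refine h3.congr_deriv ?_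
    rw [hφd]
    field_simp
    ring
  have hcont : ContinuousOn φd (Set.uIcc (0:ℝ) 1) := by
    rw [huIcc]
    apply ContinuousOn.div continuousOn_const (by fun_prop)
    intro v hv
    exact pow_ne_zero _ (hdpos v hv).ne'
  have hg : Continuous fun x : ℝ => (1 - x ^ 2) ^ m := by fun_prop
  have key := intervalIntegral.integral_comp_smul_deriv hderiv hcont hg
  have hφ0 : φ 0 = 1 := by rw [hφ]; simp [hμ₁.ne']
  have hφ1 : φ 1 = (μ₁ - μ₂) / (μ₁ + μ₂) := by rw [hφ]; simp
  rw [hφ0, hφ1] at key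
  have hcongr : (∫ v in (0:ℝ)..1, φd v • ((fun x => (1 - x ^ 2) ^ m) ∘ φ) v)
      = ∫ v in (0:ℝ)..1,
          -(2 * 4 ^ m * (μ₁ * μ₂) ^ (m + 1) * (v ^ m / (μ₁ + μ₂ * v) ^ (2*m+2))) := by
    apply intervalIntegral.integral_congr
    intro v hv
    rw [huIcc] at hv
    have hne : (0:ℝ) < μ₁ + μ₂ * v := hdpos v hv
    have h1 : 1 - φ v ^ 2 = 4 * μ₁ * μ₂ * v / (μ₁ + μ₂ * v) ^ 2 := by
      rw [hφ]; field_simp; ring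
    simp only [Function.comp, smul_eq_mul, hφd, h1, div_pow]
    rw [← pow_mul]
    field_simp
    ring
  rw [hcongr, intervalIntegral.integral_neg, intervalIntegral.integral_const_mul,
    intervalIntegral.integral_symm ((μ₁ - μ₂) / (μ₁ + μ₂)) 1] at key
  linarith [key]

lemma gammaInt (n : ℕ) {r : ℝ} (hr : 0 < r) :
    ∫ t in Set.Ioi (0:ℝ), t ^ n * Real.exp (-(r * t)) = ((Nat.factorial n : ℕ) : ℝ) / r ^ (n+1) := by
  have h := Real.integral_rpow_mul_exp_neg_mul_Ioi (a := (n:ℝ)+1) (by positivity) hr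
  rw [show ((n:ℝ)+1) - 1 = (n:ℝ) by ring] at h
  rw [setIntegral_congr_fun measurableSet_Ioi
      (fun t ht => by rw [← Real.rpow_natCast t n]), h, Real.Gamma_nat_eq_factorial,
    show ((n:ℝ)+1) = ((n+1 : ℕ) : ℝ) by push_cast; ring, Real.rpow_natCast]
  rw [div_pow, one_pow, div_mul_eq_mul_div, one_mul]

lemma gammaIntegrable (n : ℕ) {r : ℝ} (hr : 0 < r) :
    IntegrableOn (fun t => t ^ n * Real.exp (-(r * t))) (Set.Ioi (0:ℝ)) := by
  have h := integrableOn_rpow_mul_exp_neg_mul_rpow (s := (n:ℝ)) (p := 1)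
      (lt_of_lt_of_le (by norm_num) (Nat.cast_nonneg n)) one_pos hr
  refine h.congr_fun (fun t ht => ?_) measurableSet_Ioi
  beta_reduce
  rw [Real.rpow_natCast, Real.rpow_one, neg_mul]

lemma lhsEq (m : ℕ) {μ₁ μ₂ : ℝ} (hμ₁ : 0 < μ₁) (hμ₂ : 0 < μ₂) :
    ∫ t in Set.Ioi (0 : ℝ),
        t ^ m * Real.exp (-μ₁ * t) * ∫ u in (0 : ℝ)..t, u ^ m * Real.exp (-μ₂ * u)
      = ((Nat.factorial (2*m+1) : ℕ) : ℝ)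
          * ∫ v in (0:ℝ)..1, v ^ m / (μ₁ + μ₂ * v) ^ (2*m+2) := by
  set H : ℝ → ℝ → ℝ :=
    fun t v => t ^ (2*m+1) * Real.exp (-(μ₁ * t)) * (v ^ m * Real.exp (-(μ₂ * (t * v))))
    with hH
  -- Step 1: rewrite the outer integrand
  have step1 : ∀ t ∈ Set.Ioi (0:ℝ),
      t ^ m * Real.exp (-μ₁ * t) * (∫ u in (0:ℝ)..t, u ^ m * Real.exp (-μ₂ * u))
        = ∫ v in Set.Ioc (0:ℝ) 1, H t v := by
    intro t _
    have hder : ∀ v ∈ Set.uIcc (0:ℝ) 1, HasDerivAt (fun v : ℝ => t * v) t v := by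
      intro v _
      simpa using (hasDerivAt_id v).const_mul t
    have hg : Continuous fun u : ℝ => u ^ m * Real.exp (-μ₂ * u) := by fun_prop
    have key := intervalIntegral.integral_comp_smul_deriv hder continuousOn_const hg
    simp only [mul_zero, mul_one, Function.comp, smul_eq_mul] at key
    rw [← intervalIntegral.integral_of_le zero_le_one, ← key,
      ← intervalIntegral.integral_const_mul]
    apply intervalIntegral.integral_congr
    intro v _
    simp only [hH, smul_eq_mul, neg_mul]
    ring_nf
  rw [setIntegral_congr_fun measurableSet_Ioi step1]
  -- Step 2: integrability on the product
  have hf : Integrable (fun t : ℝ => t ^ (2*m+1) * Real.exp (-(μ₁ * t)))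
      (volume.restrict (Set.Ioi 0)) := gammaIntegrable (2*m+1) hμ₁
  have hone : Integrable (fun _ : ℝ => (1:ℝ)) (volume.restrict (Set.Ioc (0:ℝ) 1)) :=
    integrableOn_const measure_Ioc_lt_top.ne
  have hG := hf.mul_prod hone
  have hInt : Integrable (Function.uncurry H)
      ((volume.restrict (Set.Ioi (0:ℝ))).prod (volume.restrict (Set.Ioc (0:ℝ) 1))) := by
    have hc : Continuous (fun p : ℝ × ℝ => H p.1 p.2) := by rw [hH]; fun_prop
    apply Integrable.mono' hG hc.aestronglyMeasurable
    rw [Measure.prod_restrict]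
    filter_upwards [ae_restrict_mem (measurableSet_Ioi.prod measurableSet_Ioc)] with p hp
    obtain ⟨ht, hv⟩ := hp
    simp only [Set.mem_Ioi, Set.mem_Ioc, Set.mem_prod] at ht hv
    simp only [Function.uncurry, hH]
    have ht' : (0:ℝ) ≤ p.1 := le_of_lt ht
    have h1 : p.2 ^ m ≤ 1 := pow_le_one₀ hv.1.le hv.2
    have h2 : Real.exp (-(μ₂ * (p.1 * p.2))) ≤ 1 := by
      rw [Real.exp_le_one_iff]
      exact neg_nonpos.mpr (mul_pos hμ₂ (mul_pos ht hv.1)).le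
    have h3 : (0:ℝ) ≤ p.1 ^ (2*m+1) * Real.exp (-(μ₁ * p.1)) :=
      mul_nonneg (pow_nonneg ht' _) (Real.exp_nonneg _)
    have h5 : (0:ℝ) ≤ p.2 ^ m * Real.exp (-(μ₂ * (p.1 * p.2))) :=
      mul_nonneg (pow_nonneg hv.1.le m) (Real.exp_nonneg _)
    rw [Real.norm_eq_abs, abs_of_nonneg (mul_nonneg h3 h5)]
    have h4 : p.2 ^ m * Real.exp (-(μ₂ * (p.1 * p.2))) ≤ 1 := by
      nlinarith [Real.exp_nonneg (-(μ₂ * (p.1 * p.2))), pow_nonneg hv.1.le m]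
    nlinarith
  -- Step 3: swap the integrals
  rw [MeasureTheory.integral_integral_swap hInt]
  -- Step 4: compute the inner integral
  have step4 : ∀ v ∈ Set.Ioc (0:ℝ) 1,
      (∫ t in Set.Ioi (0:ℝ), H t v)
        = ((Nat.factorial (2*m+1) : ℕ) : ℝ) * (v ^ m / (μ₁ + μ₂ * v) ^ (2*m+2)) := by
    intro v hv
    have hr : 0 < μ₁ + μ₂ * v := by nlinarith [hv.1]
    have hpt : ∀ t : ℝ, H t v = v ^ m * (t ^ (2*m+1) * Real.exp (-((μ₁ + μ₂ * v) * t))) := by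
      intro t
      rw [hH, show -((μ₁ + μ₂ * v) * t) = -(μ₁ * t) + -(μ₂ * (t * v)) by ring, Real.exp_add]
      ring
    simp only [hpt]
    rw [MeasureTheory.integral_const_mul, gammaInt (2*m+1) hr]
    rw [show 2*m+1+1 = 2*m+2 by ring]
    ring
  rw [setIntegral_congr_fun measurableSet_Ioc step4,
    ← intervalIntegral.integral_of_le zero_le_one, intervalIntegral.integral_const_mul]

open MeasureTheory Real in
/-- Gamma comparison double-integral identity. -/
theorem stmt_5 (m : ℕ) (μ₁ μ₂ : ℝ) (hμ₁ : 0 < μ₁) (hμ₂ : 0 < μ₂) :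
    ∫ t in Set.Ioi (0 : ℝ),
        t ^ m * Real.exp (-μ₁ * t) * ∫ u in (0 : ℝ)..t, u ^ m * Real.exp (-μ₂ * u)
      = ((Nat.factorial (2 * m + 1) : ℕ) : ℝ) / (2 * 4 ^ m * (μ₁ * μ₂) ^ (m + 1))
          * ∫ x in ((μ₁ - μ₂) / (μ₁ + μ₂))..(1 : ℝ), (1 - x ^ 2) ^ m := by
  rw [lhsEq m hμ₁ hμ₂, rhsSub m hμ₁ hμ₂]
  have hne : (2 * 4 ^ m * (μ₁ * μ₂) ^ (m + 1) : ℝ) ≠ 0 := by positivity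
  field_simp
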